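/- In the local model: let t ≠ 0 and consider the ideal I = (F₀, F₁, …, Fₘ) in ℂ[x,y]/(xy − t) at the chart U_i where u_{i-1} = v_i = 1, where F_{i-1} = x^{m-i+1} + a_{m-1}x^{m-i} + … + a_{i-1} + v_{i-1}(d_{m-i+2}y + … + y^{i-1}) and F_i = u_i(x^{m-i} + … + a_i) + d_{m-i+1}y + … + y^i, subject to the relations a_{j}u_{j} = d_{m-j}v_{j}. Then the quotient (ℂ[x,y]/(xy−t))/I is a free module of rank m with basis 1, x, …, x^{m-i}, y, …, y^{i-1}. -/

import Mathlib

noncomputable section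
namespace Stmt15
open Polynomial

def Ub (m : ℕ) (d u : ℕ → ℂ) (k : ℕ) : ℂ := if k = 0 then 1 else if k = m then d 0 else u k
def Vb (m : ℕ) (v : ℕ → ℂ) (k : ℕ) : ℂ := if k = 0 then 0 else if k = m then 1 else v k

/-- the one-variable polynomial `z^k · F_k(z, t/z)` -/
def Gk (m : ℕ) (t : ℂ) (a d u v : ℕ → ℂ) (k : ℕ) : Polynomial ℂ :=
  C (Ub m d u k) * (X ^ m + ∑ r ∈ Finset.range (m - k), C (a (k + r)) * X ^ (k + r))
  + C (Vb m v k) * (C (t ^ k) + ∑ s ∈ Finset.Ico 1 k, C (d (m - k + s) * t ^ s) * X ^ (k - s))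

section
variable (m i : ℕ) (t : ℂ) (a d u v : ℕ → ℂ)

lemma Ub_zero : Ub m d u 0 = 1 := by simp [Ub]
lemma Vb_zero : Vb m v 0 = 0 := by simp [Vb]
lemma Ub_mid {k : ℕ} (h1 : k ≠ 0) (h2 : k ≠ m) : Ub m d u k = u k := by
  simp only [Ub, if_neg h1, if_neg h2]
lemma Vb_mid {k : ℕ} (h1 : k ≠ 0) (h2 : k ≠ m) : Vb m v k = v k := by
  simp only [Vb, if_neg h1, if_neg h2]
lemma Ub_top (h : m ≠ 0) : Ub m d u m = d 0 := by simp [Ub, h]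
lemma Vb_top (h : m ≠ 0) : Vb m v m = 1 := by simp [Vb, h]

lemma key (hm : 2 ≤ m)
    (hC : ∀ jj, 1 ≤ jj → jj ≤ m - 2 → v jj * u (jj + 1) = t * (u jj * v (jj + 1)))
    (hm0 : d 0 * v (m - 1) = t * u (m - 1))
    (k : ℕ) (hk : 2 ≤ k) (hkm : k ≤ m) :
    u (k-1) * (Vb m v k * t) = Ub m d u k * v (k-1) := by
  by_cases hne : k = m
  · rw [hne, Ub_top m d u (by omega), Vb_top m v (by omega)]
    linear_combination -hm0
  · rw [Ub_mid m d u (by omega) hne, Vb_mid m v (by omega) hne]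
    have := hC (k-1) (by omega) (by omega)
    rw [show k - 1 + 1 = k by omega] at this
    linear_combination -this

lemma sumA (k' : ℕ) (hk : k' + 1 ≤ m) :
    ∑ r ∈ Finset.range (m - k'), C (a (k' + r)) * X ^ (k' + r)
      = C (a k') * X ^ k'
        + ∑ r ∈ Finset.range (m - (k'+1)), C (a (k'+1+r)) * X ^ (k'+1+r) := by
  rw [show m - k' = (m - (k'+1)) + 1 by omega, Finset.sum_range_succ']
  rw [Finset.sum_congr rfl (fun r _ => by rw [show k' + (r+1) = k'+1+r by omega])]
  simp only [Nat.add_zero]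
  exact add_comm _ _

lemma cross (hm : 2 ≤ m)
    (hC : ∀ jj, 1 ≤ jj → jj ≤ m - 2 → v jj * u (jj + 1) = t * (u jj * v (jj + 1)))
    (h0 : a 0 * u 1 = t * v 1) (hm0 : d 0 * v (m - 1) = t * u (m - 1))
    (hud : ∀ jj, 1 ≤ jj → jj ≤ m - 1 → a jj * u jj = d (m - jj) * v jj)
    (k : ℕ) (hk1 : 1 ≤ k) (hkm : k ≤ m) :
    C (Ub m d u (k-1)) * Gk m t a d u v k = C (Ub m d u k) * Gk m t a d u v (k-1) := by
  obtain ⟨k', rfl⟩ : ∃ k', k = k' + 1 := ⟨k - 1, by omega⟩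
  simp only [Nat.add_sub_cancel]
  have hA := sumA m a k' hkm
  rcases Nat.eq_zero_or_pos k' with rfl | hk'
  · -- k = 1
    have h0C : C (a 0) * C (u 1) = C t * C (v 1) := by
      simp only [← C_mul]; exact congrArg C h0
    simp only [Nat.zero_add, Nat.sub_zero] at hA ⊢
    rw [Gk, Gk, Ub_zero, Vb_zero, Ub_mid m d u (k := 1) one_ne_zero (by omega),
      Vb_mid m v (k := 1) one_ne_zero (by omega)]
    simp only [Nat.zero_add, Nat.sub_zero]
    rw [hA]
    simp only [Finset.Ico_self, Finset.sum_empty, pow_one, pow_zero, C_0, C_1,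
      add_zero, zero_mul, mul_zero, one_mul, mul_one]
    linear_combination (-1 : Polynomial ℂ) * h0C
  · -- k = k' + 1, k' ≥ 1
    have hK := key m t d u v hm hC hm0 (k' + 1) (by omega) hkm
    rw [Nat.add_sub_cancel] at hK
    have hH := hud k' (by omega) (by omega)
    have CK : C (u k') * (C (Vb m v (k'+1)) * C t) = C (Ub m d u (k'+1)) * C (v k') := by
      simp only [← C_mul]; exact congrArg C (by linear_combination hK)
    have CH : C (a k') * C (u k') = C (d (m - k')) * C (v k') := by
      simp only [← C_mul]; exact congrArg C hH
    have hD : ∑ s ∈ Finset.Ico 1 (k'+1), C (d (m - (k'+1) + s) * t ^ s) * X ^ (k'+1-s)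
        = C (d (m - k')) * C t * X ^ k'
          + C t * ∑ s ∈ Finset.Ico 1 k', C (d (m - k' + s) * t ^ s) * X ^ (k' - s) := by
      rw [Finset.sum_eq_sum_Ico_succ_bot (by omega : 1 < k'+1)]
      rw [show m - (k'+1) + 1 = m - k' by omega, pow_one, Nat.add_sub_cancel, ← C_mul]
      congr 1
      rw [Finset.sum_Ico_eq_sum_range, Finset.sum_Ico_eq_sum_range, Finset.mul_sum]
      rw [show k' + 1 - 2 = k' - 1 by omega]
      refine Finset.sum_congr rfl (fun j hj => ?_)
      rw [show m - (k'+1) + (2+j) = m - k' + (1+j) by omega,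
        show k' + 1 - (2+j) = k' - (1+j) by omega,
        show 2 + j = (1+j) + 1 by omega]
      conv_rhs => rw [← mul_assoc, ← C_mul]
      exact congrArg (· * X ^ (k' - (1+j))) (congrArg C (by ring))
    have hT : (C (t ^ (k'+1)) : Polynomial ℂ) = C t * C (t ^ k') := by
      rw [← C_mul, ← pow_succ']
    rw [Gk, Gk, Ub_mid m d u (k := k') (by omega) (by omega),
      Vb_mid m v (k := k') (by omega) (by omega), hA, hD, hT]
    linear_combination CK * (C (d (m - k')) * X ^ k' + C (t ^ k')
        + ∑ s ∈ Finset.Ico 1 k', C (d (m - k' + s) * t ^ s) * X ^ (k' - s))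
      - (C (Ub m d u (k'+1)) * X ^ k') * CH


lemma une (hm : 2 ≤ m) (hi1 : 1 ≤ i) (him : i ≤ m) (ht : t ≠ 0)
    (hu : ∀ jj, jj < i → u jj = 1) (hv : ∀ jj, i ≤ jj → v jj = 1)
    (hC : ∀ jj, 1 ≤ jj → jj ≤ m - 2 → v jj * u (jj + 1) = t * (u jj * v (jj + 1)))
    (h0 : a 0 * u 1 = t * v 1) :
    ∀ k, k ≤ m - 1 → Ub m d u k ≠ 0 := by
  have hbase : i ≤ m - 1 → u i ≠ 0 := by
    intro him1
    rcases eq_or_lt_of_le hi1 with h1 | h2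
    · -- i = 1
      rw [hv 1 (by omega)] at h0
      intro h
      rw [← h1] at h
      rw [h, mul_zero, mul_one] at h0
      exact ht h0.symm
    · -- 2 ≤ i
      have hc := hC (i-1) (by omega) (by omega)
      rw [show i - 1 + 1 = i by omega, hu (i-1) (by omega), hv i (le_refl i)] at hc
      intro h
      rw [h, mul_zero] at hc
      simp at hc
      exact ht hc.symm
  have hind : ∀ k, i ≤ k → k ≤ m - 1 → u k ≠ 0 := by
    intro k hk
    induction k, hk using Nat.le_induction with
    | base => exact hbase
    | succ n hn ih =>
      intro hnm
      have hc := hC n (by omega) (by omega)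
      rw [hv n (by omega), hv (n+1) (by omega), one_mul, mul_one] at hc
      rw [hc]
      exact mul_ne_zero ht (ih (by omega))
  intro k hk
  rcases Nat.eq_zero_or_pos k with rfl | hk0
  · rw [Ub_zero]; exact one_ne_zero
  · rw [Ub_mid m d u (by omega) (by omega)]
    rcases lt_or_ge k i with h | h
    · rw [hu k h]; exact one_ne_zero
    · exact hind k h hk

lemma prop_all (hm : 2 ≤ m) (hi1 : 1 ≤ i) (him : i ≤ m) (ht : t ≠ 0)
    (hu : ∀ jj, jj < i → u jj = 1) (hv : ∀ jj, i ≤ jj → v jj = 1)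
    (hC : ∀ jj, 1 ≤ jj → jj ≤ m - 2 → v jj * u (jj + 1) = t * (u jj * v (jj + 1)))
    (h0 : a 0 * u 1 = t * v 1) (hm0 : d 0 * v (m - 1) = t * u (m - 1))
    (hud : ∀ jj, 1 ≤ jj → jj ≤ m - 1 → a jj * u jj = d (m - jj) * v jj) :
    ∀ k, k ≤ m → Gk m t a d u v k = C (Ub m d u k) * Gk m t a d u v (i-1) := by
  have hne := une m i t a d u v hm hi1 him ht hu hv hC h0
  have hUi : Ub m d u (i-1) = 1 := by
    rcases Nat.eq_zero_or_pos (i-1) with h | h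
    · rw [h, Ub_zero]
    · rw [Ub_mid m d u (by omega) (by omega)]; exact hu (i-1) (by omega)
  have up : ∀ n, i - 1 ≤ n → n ≤ m → Gk m t a d u v n = C (Ub m d u n) * Gk m t a d u v (i-1) := by
    intro n hn
    induction n, hn using Nat.le_induction with
    | base => intro _; rw [hUi, C_1, one_mul]
    | succ n hn ih =>
      intro hnm
      have hc := cross m t a d u v hm hC h0 hm0 hud (n+1) (by omega) hnm
      rw [Nat.add_sub_cancel] at hc
      have ihn := ih (by omega)
      rw [ihn, ← mul_assoc, ← C_mul, mul_comm (Ub m d u (n+1)), C_mul, mul_assoc] at hc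
      exact mul_left_cancel₀ ((C_ne_zero).mpr (hne n (by omega))) hc
  have down : ∀ j, j ≤ i - 1 →
      Gk m t a d u v (i-1-j) = C (Ub m d u (i-1-j)) * Gk m t a d u v (i-1) := by
    intro j
    induction j with
    | zero => intro _; simp only [Nat.sub_zero, hUi, C_1, one_mul]
    | succ j ih =>
      intro hj
      have hn1 : i - 1 - (j+1) + 1 = i - 1 - j := by omega
      have hc := cross m t a d u v hm hC h0 hm0 hud (i-1-(j+1)+1) (by omega) (by omega)
      rw [Nat.add_sub_cancel, hn1] at hc
      rw [ih (by omega), ← mul_assoc, ← C_mul, mul_comm (Ub m d u (i-1-(j+1))), C_mul,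
        mul_assoc] at hc
      exact (mul_left_cancel₀ ((C_ne_zero).mpr (hne (i-1-j) (by omega))) hc.symm)
  intro k hk
  rcases le_or_gt k (i-1) with h | h
  · have := down (i-1-k) (by omega)
    rwa [show i - 1 - (i-1-k) = k by omega] at this
  · exact up k (by omega) hk


/-- the lower-order part of `G` -/
def Qp : Polynomial ℂ :=
  (∑ r ∈ Finset.range (m-(i-1)), C (a (i-1+r)) * X^(i-1+r))
  + (C (Vb m v (i-1) * t^(i-1))
     + ∑ s ∈ Finset.Ico 1 (i-1), C (Vb m v (i-1) * (d (m-(i-1)+s) * t^s)) * X^(i-1-s))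

lemma Ub_chart (hm : 2 ≤ m) (hi1 : 1 ≤ i) (him : i ≤ m)
    (hu : ∀ jj, jj < i → u jj = 1) : Ub m d u (i-1) = 1 := by
  rcases Nat.eq_zero_or_pos (i-1) with h | h
  · rw [h, Ub_zero]
  · rw [Ub_mid m d u (by omega) (by omega)]; exact hu (i-1) (by omega)

lemma G_split (hm : 2 ≤ m) (hi1 : 1 ≤ i) (him : i ≤ m)
    (hu : ∀ jj, jj < i → u jj = 1) :
    Gk m t a d u v (i-1) = X ^ m + Qp m i t a d v := by
  rw [Gk, Ub_chart m i d u hm hi1 him hu, C_1, one_mul, Qp]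
  rw [mul_add, Finset.mul_sum]
  simp only [← mul_assoc, ← C_mul]
  ring

lemma Q_deg (hm : 2 ≤ m) (hi1 : 1 ≤ i) (him : i ≤ m) :
    (Qp m i t a d v).degree < (m : WithBot ℕ) := by
  have hm0 : (0 : WithBot ℕ) < (m : WithBot ℕ) := by
    exact_mod_cast (show 0 < m by omega)
  refine lt_of_le_of_lt (degree_add_le _ _) (max_lt ?_ (lt_of_le_of_lt (degree_add_le _ _)
    (max_lt (lt_of_le_of_lt degree_C_le hm0) ?_)))
  · refine lt_of_le_of_lt (degree_sum_le _ _) ((Finset.sup_lt_iff (by exact WithBot.bot_lt_coe m)).mpr ?_)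
    intro r hr
    refine lt_of_le_of_lt (degree_C_mul_X_pow_le _ _) ?_
    exact_mod_cast (by have := Finset.mem_range.mp hr; omega : i - 1 + r < m)
  · refine lt_of_le_of_lt (degree_sum_le _ _) ((Finset.sup_lt_iff (by exact WithBot.bot_lt_coe m)).mpr ?_)
    intro s hs
    refine lt_of_le_of_lt (degree_C_mul_X_pow_le _ _) ?_
    exact_mod_cast (by omega : i - 1 - s < m)

lemma G_monic (hm : 2 ≤ m) (hi1 : 1 ≤ i) (him : i ≤ m)
    (hu : ∀ jj, jj < i → u jj = 1) : (Gk m t a d u v (i-1)).Monic := by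
  rw [G_split m i t a d u v hm hi1 him hu]
  exact monic_X_pow_add (Q_deg m i t a d v hm hi1 him)

lemma G_natDegree (hm : 2 ≤ m) (hi1 : 1 ≤ i) (him : i ≤ m)
    (hu : ∀ jj, jj < i → u jj = 1) : (Gk m t a d u v (i-1)).natDegree = m := by
  have hdeg : (Gk m t a d u v (i-1)).degree = m := by
    rw [G_split m i t a d u v hm hi1 him hu,
      degree_add_eq_left_of_degree_lt (by rw [degree_X_pow]; exact Q_deg m i t a d v hm hi1 him),
      degree_X_pow]
  exact natDegree_eq_of_degree_eq_some hdeg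

lemma G_coeff_zero (hm : 2 ≤ m) (hi1 : 1 ≤ i) (him : i ≤ m) (ht : t ≠ 0)
    (hu : ∀ jj, jj < i → u jj = 1) (hv : ∀ jj, i ≤ jj → v jj = 1)
    (hC : ∀ jj, 1 ≤ jj → jj ≤ m - 2 → v jj * u (jj + 1) = t * (u jj * v (jj + 1)))
    (h0 : a 0 * u 1 = t * v 1) (hm0 : d 0 * v (m - 1) = t * u (m - 1)) :
    (Gk m t a d u v (i-1)).coeff 0 ≠ 0 := by
  rw [G_split m i t a d u v hm hi1 him hu, coeff_add, coeff_X_pow,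
    if_neg (show ¬ ((0:ℕ) = m) by omega), zero_add, Qp, coeff_add, coeff_add, coeff_C,
    if_pos rfl, finset_sum_coeff, finset_sum_coeff,
    Finset.sum_eq_zero (s := Finset.Ico 1 (i-1)) (fun s hs => by
      rw [coeff_C_mul_X_pow]
      exact if_neg (by have := Finset.mem_Ico.mp hs; omega)), add_zero]
  rcases eq_or_lt_of_le hi1 with h1 | h2
  · -- i = 1
    obtain rfl := h1.symm
    rw [show (1:ℕ) - 1 = 0 by rfl, Vb_zero, zero_mul, add_zero]
    rw [Finset.sum_eq_single 0 (fun r _ hr => by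
        rw [coeff_C_mul_X_pow]; exact if_neg (by omega))
      (fun h => absurd (Finset.mem_range.mpr (by omega)) h)]
    rw [coeff_C_mul_X_pow, if_pos rfl]
    rw [hv 1 (by omega), mul_one] at h0
    intro h
    rw [show (0:ℕ) + 0 = 0 from rfl] at h
    rw [h, zero_mul] at h0
    exact ht h0.symm
  · -- 2 ≤ i
    rw [Finset.sum_eq_zero (fun r hr => by
      rw [coeff_C_mul_X_pow]; exact if_neg (by omega)), zero_add]
    have hvne : v (i-1) ≠ 0 := by
      rcases eq_or_ne i m with rfl | hne
      · rw [hu (i-1) (by omega)] at hm0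
        intro h
        rw [h, mul_zero, mul_one] at hm0
        exact ht hm0.symm
      · have hc := hC (i-1) (by omega) (by omega)
        rw [show i - 1 + 1 = i by omega, hu (i-1) (by omega), hv i (le_refl i), one_mul,
          mul_one] at hc
        intro h
        rw [h, zero_mul] at hc
        exact ht hc.symm
    rw [Vb_mid m v (by omega) (by omega)]
    exact mul_ne_zero hvne (pow_ne_zero _ ht)


end

section
variable {R : Type} [CommRing R] [Algebra ℂ R]

lemma tw_pow (t : ℂ) (ρ w : R) (hw : ρ * w = 1) (s k : ℕ) (hs : s ≤ k) :
    (algebraMap ℂ R t * w) ^ s * ρ ^ k = algebraMap ℂ R t ^ s * ρ ^ (k - s) := by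
  have h1 : w ^ s * ρ ^ s = 1 := by rw [← mul_pow, mul_comm w ρ, hw, one_pow]
  rw [show k = s + (k - s) by omega, pow_add, mul_pow, Nat.add_sub_cancel_left]
  linear_combination (algebraMap ℂ R t ^ s * ρ ^ (k - s)) * h1

lemma evalF (m : ℕ) (t : ℂ) (a d u v : ℕ → ℂ) (hm : 2 ≤ m)
    (F : ℕ → MvPolynomial (Fin 2) ℂ)
    (hF0 : F 0 = MvPolynomial.X 0 ^ m
      + ∑ r ∈ Finset.range m, MvPolynomial.C (a r) * MvPolynomial.X 0 ^ r)
    (hFm : F m = MvPolynomial.C (d 0) + MvPolynomial.X 1 ^ m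
      + ∑ s ∈ Finset.Ico 1 m, MvPolynomial.C (d s) * MvPolynomial.X 1 ^ s)
    (hFk : ∀ kk, 1 ≤ kk → kk ≤ m - 1 →
      F kk = MvPolynomial.C (u kk) *
          (MvPolynomial.X 0 ^ (m - kk)
            + ∑ r ∈ Finset.range (m - kk), MvPolynomial.C (a (kk + r)) * MvPolynomial.X 0 ^ r)
        + MvPolynomial.C (v kk) *
          (MvPolynomial.X 1 ^ kk
            + ∑ s ∈ Finset.Ico 1 kk, MvPolynomial.C (d (m - kk + s)) * MvPolynomial.X 1 ^ s))
    (ρ w : R) (hw : ρ * w = 1) (k : ℕ) (hk : k ≤ m) :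
    (MvPolynomial.aeval ![ρ, algebraMap ℂ R t * w]) (F k) * ρ ^ k
      = Polynomial.aeval ρ (Gk m t a d u v k) := by
  set tw : R := algebraMap ℂ R t * w with htw
  have twp : ∀ s kk : ℕ, s ≤ kk → tw ^ s * ρ ^ kk = algebraMap ℂ R t ^ s * ρ ^ (kk - s) :=
    fun s kk h => by rw [htw]; exact tw_pow t ρ w hw s kk h
  rcases Nat.eq_zero_or_pos k with rfl | hk1
  · rw [hF0, Gk, Ub_zero, Vb_zero]
    simp only [map_add, map_mul, map_pow, map_sum, MvPolynomial.aeval_X, MvPolynomial.aeval_C,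
      Matrix.cons_val_zero, Polynomial.aeval_C, Polynomial.aeval_X, map_one, map_zero,
      Nat.sub_zero, Nat.zero_add, pow_zero, mul_one, one_mul, zero_mul, add_zero]
  · by_cases hkm : k = m
    · rw [hkm, hFm, Gk, Ub_top m d u (by omega), Vb_top m v (by omega)]
      simp only [map_add, map_mul, map_pow, map_sum, MvPolynomial.aeval_X, MvPolynomial.aeval_C,
        Matrix.cons_val_one, Matrix.head_cons, Matrix.cons_val_zero, Polynomial.aeval_C, Polynomial.aeval_X,
        map_one, one_mul, Nat.sub_self, Finset.range_zero, Finset.sum_empty, add_zero]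
      rw [add_mul, add_mul, Finset.sum_mul]
      rw [twp m m le_rfl, Nat.sub_self, pow_zero, mul_one]
      simp only [Nat.zero_add]
      rw [Finset.sum_congr (rfl : Finset.Ico 1 m = Finset.Ico 1 m) (fun s hs => by
        rw [mul_assoc, twp s m (le_of_lt (Finset.mem_Ico.mp hs).2), ← mul_assoc])]
      ring
    · rw [hFk k (by omega) (by omega), Gk, Ub_mid m d u (by omega) hkm,
        Vb_mid m v (by omega) hkm]
      simp only [map_add, map_mul, map_pow, map_sum, MvPolynomial.aeval_X, MvPolynomial.aeval_C,
        Matrix.cons_val_zero, Matrix.cons_val_one, Matrix.head_cons, Polynomial.aeval_C,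
        Polynomial.aeval_X]
      rw [add_mul, mul_assoc, mul_assoc, add_mul, add_mul, Finset.sum_mul, Finset.sum_mul]
      rw [← pow_add, show m - k + k = m by omega]
      rw [twp k k le_rfl, Nat.sub_self, pow_zero, mul_one]
      rw [Finset.sum_congr (rfl : Finset.range (m-k) = Finset.range (m-k)) (fun r _ => by
        rw [mul_assoc, ← pow_add, show r + k = k + r by omega])]
      rw [Finset.sum_congr (rfl : Finset.Ico 1 k = Finset.Ico 1 k) (fun s hs => by
        rw [mul_assoc, twp s k (le_of_lt (Finset.mem_Ico.mp hs).2), ← mul_assoc])]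


end

section
variable (m i : ℕ) (t : ℂ) (a d u v : ℕ → ℂ) (F : ℕ → MvPolynomial (Fin 2) ℂ)
  (I : Ideal (MvPolynomial (Fin 2) ℂ))

lemma mk_C_mul (c : ℂ) (p : MvPolynomial (Fin 2) ℂ) :
    Ideal.Quotient.mk I (MvPolynomial.C c * p) = c • Ideal.Quotient.mk I p := by
  rw [← MvPolynomial.smul_eq_C_mul, ← Ideal.Quotient.mkₐ_eq_mk ℂ I, map_smul]

set_option maxHeartbeats 2000000 in
lemma span_top (hm : 2 ≤ m) (hi1 : 1 ≤ i) (him : i ≤ m)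
    (hu : ∀ jj, jj < i → u jj = 1) (hv : ∀ jj, i ≤ jj → v jj = 1)
    (hF0 : F 0 = MvPolynomial.X 0 ^ m + ∑ r ∈ Finset.range m, MvPolynomial.C (a r) * MvPolynomial.X 0 ^ r)
    (hFm : F m = MvPolynomial.C (d 0) + MvPolynomial.X 1 ^ m + ∑ s ∈ Finset.Ico 1 m, MvPolynomial.C (d s) * MvPolynomial.X 1 ^ s)
    (hFk : ∀ kk, 1 ≤ kk → kk ≤ m - 1 →
      F kk = MvPolynomial.C (u kk) *
          (MvPolynomial.X 0 ^ (m - kk) + ∑ r ∈ Finset.range (m - kk), MvPolynomial.C (a (kk + r)) * MvPolynomial.X 0 ^ r)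
        + MvPolynomial.C (v kk) *
          (MvPolynomial.X 1 ^ kk + ∑ s ∈ Finset.Ico 1 kk, MvPolynomial.C (d (m - kk + s)) * MvPolynomial.X 1 ^ s))
    (hxy : MvPolynomial.X 0 * MvPolynomial.X 1 - MvPolynomial.C t ∈ I) (hFmem : ∀ k, k ≤ m → F k ∈ I) :
    ⊤ ≤ Submodule.span ℂ (Set.range (fun j : Fin m => Ideal.Quotient.mk I
      (if (j : ℕ) ≤ m - i then MvPolynomial.X 0 ^ (j : ℕ) else MvPolynomial.X 1 ^ ((j : ℕ) - (m - i))))) := by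
  set W := Submodule.span ℂ (Set.range (fun j : Fin m => Ideal.Quotient.mk I
      (if (j : ℕ) ≤ m - i then MvPolynomial.X 0 ^ (j : ℕ) else MvPolynomial.X 1 ^ ((j : ℕ) - (m - i))))) with hWdef
  have hCmul : ∀ (c : ℂ) (p : MvPolynomial (Fin 2) ℂ),
      Ideal.Quotient.mk I (MvPolynomial.C c * p) = c • Ideal.Quotient.mk I p := mk_C_mul I
  have hxlow : ∀ e, e ≤ m - i → Ideal.Quotient.mk I (MvPolynomial.X 0 ^ e) ∈ W := by
    intro e he
    apply Submodule.subset_span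
    exact ⟨⟨e, by omega⟩, by simp only [if_pos he]⟩
  have hylow : ∀ e, e ≤ i - 1 → Ideal.Quotient.mk I (MvPolynomial.X 1 ^ e) ∈ W := by
    intro e he
    rcases Nat.eq_zero_or_pos e with rfl | he1
    · have h := hxlow 0 (by omega)
      rw [pow_zero] at h
      rw [pow_zero]
      exact h
    · apply Submodule.subset_span
      refine ⟨⟨m - i + e, by omega⟩, ?_⟩
      simp only
      rw [if_neg (by omega), show m - i + e - (m - i) = e by omega]
  have hzero : ∀ p, p ∈ I → Ideal.Quotient.mk I p = 0 :=
    fun p hp => Ideal.Quotient.eq_zero_iff_mem.mpr hp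
  have hred : ∀ p q : ℕ, Ideal.Quotient.mk I (MvPolynomial.X 0 ^ (p+1) * MvPolynomial.X 1 ^ (q+1))
      = t • Ideal.Quotient.mk I (MvPolynomial.X 0 ^ p * MvPolynomial.X 1 ^ q) := by
    intro p q
    have hdiff : (MvPolynomial.X 0 ^ (p+1) * MvPolynomial.X 1 ^ (q+1) - MvPolynomial.C t * (MvPolynomial.X 0 ^ p * MvPolynomial.X 1 ^ q)
          : MvPolynomial (Fin 2) ℂ)
        = (MvPolynomial.X 0 * MvPolynomial.X 1 - MvPolynomial.C t) * (MvPolynomial.X 0 ^ p * MvPolynomial.X 1 ^ q) := by ring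
    have hm2 : (MvPolynomial.X 0 * MvPolynomial.X 1 - MvPolynomial.C t) * (MvPolynomial.X 0 ^ p * MvPolynomial.X 1 ^ q) ∈ I := I.mul_mem_right _ hxy
    rw [← hdiff] at hm2
    rw [Ideal.Quotient.eq.mpr hm2, hCmul]
  have hmixpure : ∀ q p : ℕ, Ideal.Quotient.mk I (MvPolynomial.X 0 ^ p * MvPolynomial.X 1 ^ q)
      = t ^ (min p q) • Ideal.Quotient.mk I (MvPolynomial.X 0 ^ (p - q) * MvPolynomial.X 1 ^ (q - p)) := by
    intro q
    induction q with
    | zero =>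
      intro p
      simp only [Nat.min_zero, pow_zero, one_smul, Nat.sub_zero, Nat.zero_sub]
    | succ q ih =>
      intro p
      rcases Nat.eq_zero_or_pos p with rfl | hp
      · simp only [Nat.zero_min, pow_zero, one_smul, Nat.zero_sub, Nat.sub_zero]
      · obtain ⟨p', rfl⟩ : ∃ p', p = p' + 1 := ⟨p - 1, by omega⟩
        rw [hred p' q, ih p', smul_smul, show min (p'+1) (q+1) = min p' q + 1 by omega,
          pow_succ', show p'+1-(q+1) = p'-q by omega, show q+1-(p'+1) = q - p' by omega]
  have hpure : ∀ n : ℕ, Ideal.Quotient.mk I (MvPolynomial.X 0 ^ n) ∈ W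
      ∧ Ideal.Quotient.mk I (MvPolynomial.X 1 ^ n) ∈ W := by
    intro n
    induction n using Nat.strong_induction_on with
    | _ n IH =>
    have hmixIH1 : ∀ p q : ℕ, p < n → q ≤ i - 1 →
        Ideal.Quotient.mk I (MvPolynomial.X 0 ^ p * MvPolynomial.X 1 ^ q) ∈ W := by
      intro p q hp hq
      rw [hmixpure q p]
      apply Submodule.smul_mem
      rcases le_or_gt q p with h | h
      · rw [show q - p = 0 by omega, pow_zero, mul_one]
        exact (IH (p - q) (by omega)).1
      · rw [show p - q = 0 by omega, pow_zero, one_mul]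
        exact hylow (q - p) (by omega)
    have hmixIH2 : ∀ p q : ℕ, p ≤ m - i → q < n →
        Ideal.Quotient.mk I (MvPolynomial.X 0 ^ p * MvPolynomial.X 1 ^ q) ∈ W := by
      intro p q hp hq
      rw [hmixpure q p]
      apply Submodule.smul_mem
      rcases le_or_gt q p with h | h
      · rw [show q - p = 0 by omega, pow_zero, mul_one]
        exact hxlow (p - q) (by omega)
      · rw [show p - q = 0 by omega, pow_zero, one_mul]
        exact (IH (q - p) (by omega)).2
    constructor
    · -- MvPolynomial.X 0 ^ n
      rcases le_or_gt n (m - i) with h | h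
      · exact hxlow n h
      · set q := n - (m - i + 1) with hqdef
        have hqn : q + (m - i + 1) = n := by omega
        have hXn : (MvPolynomial.X 0 : MvPolynomial (Fin 2) ℂ) ^ n = MvPolynomial.X 0 ^ q * MvPolynomial.X 0 ^ (m - i + 1) := by
          rw [← pow_add, hqn]
        rcases eq_or_lt_of_le hi1 with h1 | h2
        · -- i = 1, use F 0
          obtain rfl := h1.symm
          have hmemF : Ideal.Quotient.mk I (MvPolynomial.X 0 ^ q * F 0) = 0 :=
            hzero _ (I.mul_mem_left _ (hFmem 0 (by omega)))
          have hexp : (MvPolynomial.X 0 : MvPolynomial (Fin 2) ℂ) ^ n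
              = MvPolynomial.X 0 ^ q * F 0 - ∑ r ∈ Finset.range m, MvPolynomial.X 0 ^ q * (MvPolynomial.C (a r) * MvPolynomial.X 0 ^ r) := by
            rw [hF0, ← Finset.mul_sum, hXn, show m - 1 + 1 = m by omega]
            ring
          rw [hexp, map_sub, hmemF, zero_sub]
          apply Submodule.neg_mem
          rw [map_sum]
          apply Submodule.sum_mem
          intro r hr
          have hr' := Finset.mem_range.mp hr
          rw [show (MvPolynomial.X 0 : MvPolynomial (Fin 2) ℂ) ^ q * (MvPolynomial.C (a r) * MvPolynomial.X 0 ^ r)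
            = MvPolynomial.C (a r) * MvPolynomial.X 0 ^ (q + r) by rw [mul_left_comm, ← pow_add], hCmul]
          exact Submodule.smul_mem _ _ ((IH (q + r) (by omega)).1)
        · -- 2 ≤ i, use F (i-1)
          have hmemF : Ideal.Quotient.mk I (MvPolynomial.X 0 ^ q * F (i-1)) = 0 :=
            hzero _ (I.mul_mem_left _ (hFmem (i-1) (by omega)))
          have hexp : (MvPolynomial.X 0 : MvPolynomial (Fin 2) ℂ) ^ n
              = MvPolynomial.X 0 ^ q * F (i-1)
                - ((∑ r ∈ Finset.range (m-i+1), MvPolynomial.X 0 ^ q * (MvPolynomial.C (a (i-1+r)) * MvPolynomial.X 0 ^ r))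
                  + MvPolynomial.C (v (i-1)) * (MvPolynomial.X 0 ^ q * MvPolynomial.X 1 ^ (i-1)
                    + ∑ s ∈ Finset.Ico 1 (i-1), MvPolynomial.X 0 ^ q * (MvPolynomial.C (d (m-(i-1)+s)) * MvPolynomial.X 1 ^ s))) := by
            rw [hFk (i-1) (by omega) (by omega), hu (i-1) (by omega), map_one, one_mul,
              show m - (i-1) = m - i + 1 by omega, ← Finset.mul_sum, ← Finset.mul_sum, hXn]
            ring
          rw [hexp, map_sub, hmemF, zero_sub]
          apply Submodule.neg_mem
          rw [map_add, map_sum]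
          apply Submodule.add_mem
          · apply Submodule.sum_mem
            intro r hr
            have hr' := Finset.mem_range.mp hr
            rw [show (MvPolynomial.X 0 : MvPolynomial (Fin 2) ℂ) ^ q * (MvPolynomial.C (a (i-1+r)) * MvPolynomial.X 0 ^ r)
              = MvPolynomial.C (a (i-1+r)) * MvPolynomial.X 0 ^ (q + r) by rw [mul_left_comm, ← pow_add], hCmul]
            exact Submodule.smul_mem _ _ ((IH (q + r) (by omega)).1)
          · rw [hCmul]
            apply Submodule.smul_mem
            rw [map_add, map_sum]
            apply Submodule.add_mem
            · exact hmixIH1 q (i-1) (by omega) (le_refl _)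
            · apply Submodule.sum_mem
              intro s hs
              have hs' := Finset.mem_Ico.mp hs
              rw [show (MvPolynomial.X 0 : MvPolynomial (Fin 2) ℂ) ^ q * (MvPolynomial.C (d (m-(i-1)+s)) * MvPolynomial.X 1 ^ s)
                = MvPolynomial.C (d (m-(i-1)+s)) * (MvPolynomial.X 0 ^ q * MvPolynomial.X 1 ^ s) by ring, hCmul]
              exact Submodule.smul_mem _ _ (hmixIH1 q s (by omega) (by omega))
    · -- MvPolynomial.X 1 ^ n
      rcases le_or_gt n (i - 1) with h | h
      · exact hylow n h
      · set q := n - i with hqdef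
        have hqn : q + i = n := by omega
        by_cases him' : i = m
        · -- use F m
          have hmemF : Ideal.Quotient.mk I (MvPolynomial.X 1 ^ q * F m) = 0 :=
            hzero _ (I.mul_mem_left _ (hFmem m (le_refl m)))
          have hX1n : (MvPolynomial.X 1 : MvPolynomial (Fin 2) ℂ) ^ n = MvPolynomial.X 1 ^ q * MvPolynomial.X 1 ^ m := by
            rw [← pow_add]; congr 1; omega
          have hexp : (MvPolynomial.X 1 : MvPolynomial (Fin 2) ℂ) ^ n
              = MvPolynomial.X 1 ^ q * F m
                - (MvPolynomial.X 1 ^ q * MvPolynomial.C (d 0)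
                  + ∑ s ∈ Finset.Ico 1 m, MvPolynomial.X 1 ^ q * (MvPolynomial.C (d s) * MvPolynomial.X 1 ^ s)) := by
            rw [hFm, ← Finset.mul_sum, hX1n]
            ring
          rw [hexp, map_sub, hmemF, zero_sub]
          apply Submodule.neg_mem
          rw [map_add, map_sum]
          apply Submodule.add_mem
          · rw [show (MvPolynomial.X 1 : MvPolynomial (Fin 2) ℂ) ^ q * MvPolynomial.C (d 0) = MvPolynomial.C (d 0) * MvPolynomial.X 1 ^ q by ring,
              hCmul]
            exact Submodule.smul_mem _ _ ((IH q (by omega)).2)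
          · apply Submodule.sum_mem
            intro s hs
            have hs' := Finset.mem_Ico.mp hs
            rw [show (MvPolynomial.X 1 : MvPolynomial (Fin 2) ℂ) ^ q * (MvPolynomial.C (d s) * MvPolynomial.X 1 ^ s)
              = MvPolynomial.C (d s) * MvPolynomial.X 1 ^ (q + s) by rw [mul_left_comm, ← pow_add], hCmul]
            exact Submodule.smul_mem _ _ ((IH (q + s) (by omega)).2)
        · -- i ≤ m - 1, use F i
          have hmemF : Ideal.Quotient.mk I (MvPolynomial.X 1 ^ q * F i) = 0 :=
            hzero _ (I.mul_mem_left _ (hFmem i (by omega)))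
          have hX1n : (MvPolynomial.X 1 : MvPolynomial (Fin 2) ℂ) ^ n = MvPolynomial.X 1 ^ q * MvPolynomial.X 1 ^ i := by
            rw [← pow_add, hqn]
          have hexp : (MvPolynomial.X 1 : MvPolynomial (Fin 2) ℂ) ^ n
              = MvPolynomial.X 1 ^ q * F i
                - (MvPolynomial.C (u i) * (MvPolynomial.X 1 ^ q * MvPolynomial.X 0 ^ (m-i)
                    + ∑ r ∈ Finset.range (m-i), MvPolynomial.X 1 ^ q * (MvPolynomial.C (a (i+r)) * MvPolynomial.X 0 ^ r))
                  + ∑ s ∈ Finset.Ico 1 i, MvPolynomial.X 1 ^ q * (MvPolynomial.C (d (m-i+s)) * MvPolynomial.X 1 ^ s)) := by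
            rw [hFk i (by omega) (by omega), hv i (le_refl i), map_one, one_mul,
              ← Finset.mul_sum, ← Finset.mul_sum, hX1n]
            ring
          rw [hexp, map_sub, hmemF, zero_sub]
          apply Submodule.neg_mem
          rw [map_add, map_sum]
          apply Submodule.add_mem
          · rw [hCmul]
            apply Submodule.smul_mem
            rw [map_add, map_sum]
            apply Submodule.add_mem
            · rw [show (MvPolynomial.X 1 : MvPolynomial (Fin 2) ℂ) ^ q * MvPolynomial.X 0 ^ (m-i)
                = MvPolynomial.X 0 ^ (m-i) * MvPolynomial.X 1 ^ q by ring]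
              exact hmixIH2 (m-i) q (le_refl _) (by omega)
            · apply Submodule.sum_mem
              intro r hr
              have hr' := Finset.mem_range.mp hr
              rw [show (MvPolynomial.X 1 : MvPolynomial (Fin 2) ℂ) ^ q * (MvPolynomial.C (a (i+r)) * MvPolynomial.X 0 ^ r)
                = MvPolynomial.C (a (i+r)) * (MvPolynomial.X 0 ^ r * MvPolynomial.X 1 ^ q) by ring, hCmul]
              exact Submodule.smul_mem _ _ (hmixIH2 r q (by omega) (by omega))
          · apply Submodule.sum_mem
            intro s hs
            have hs' := Finset.mem_Ico.mp hs
            rw [show (MvPolynomial.X 1 : MvPolynomial (Fin 2) ℂ) ^ q * (MvPolynomial.C (d (m-i+s)) * MvPolynomial.X 1 ^ s)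
              = MvPolynomial.C (d (m-i+s)) * MvPolynomial.X 1 ^ (q + s) by rw [mul_left_comm, ← pow_add], hCmul]
            exact Submodule.smul_mem _ _ ((IH (q + s) (by omega)).2)
  have hmono : ∀ (α : Fin 2 →₀ ℕ) (c : ℂ), Ideal.Quotient.mk I (MvPolynomial.monomial α c) ∈ W := by
    intro α c
    have hmeq : (MvPolynomial.monomial α c : MvPolynomial (Fin 2) ℂ)
        = MvPolynomial.C c * (MvPolynomial.X 0 ^ (α 0) * MvPolynomial.X 1 ^ (α 1)) := by
      rw [MvPolynomial.monomial_eq, Finsupp.prod_fintype _ _ (fun j => pow_zero _), Fin.prod_univ_two]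
    rw [hmeq, hCmul]
    apply Submodule.smul_mem
    rw [hmixpure (α 1) (α 0)]
    apply Submodule.smul_mem
    rcases le_or_gt (α 1) (α 0) with h | h
    · rw [show α 1 - α 0 = 0 by omega, pow_zero, mul_one]
      exact (hpure _).1
    · rw [show α 0 - α 1 = 0 by omega, pow_zero, one_mul]
      exact (hpure _).2
  intro z hz
  obtain ⟨p, rfl⟩ := Ideal.Quotient.mk_surjective z
  clear hz
  induction p using MvPolynomial.induction_on' with
  | monomial α c => exact hmono α c
  | add p q hp hq => rw [map_add]; exact Submodule.add_mem _ hp hq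

end

end Stmt15
end

open MvPolynomial

set_option maxHeartbeats 2000000 in
/-- in the local model of the relative Hilbert scheme of the node `xy = t`
(`t ≠ 0`), on the chart `Uᵢ` (`u_j = 1` for `j < i`, `v_j = 1` for `j ≥ i`), with the chart
relations, the quotient of `ℂ[x,y]/(xy − t)` by the universal ideal `I = (F₀, …, Fₘ)` is a
free module of rank `m` with basis `1, x, …, x^{m-i}, y, …, y^{i-1}`. -/
theorem stmt_15 (m i : ℕ) (hm : 2 ≤ m) (hi1 : 1 ≤ i) (him : i ≤ m)
    (t : ℂ) (ht : t ≠ 0) (a d u v : ℕ → ℂ)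
    -- chart U_i
    (hu : ∀ jj, jj < i → u jj = 1) (hv : ∀ jj, i ≤ jj → v jj = 1)
    -- equations of C̃
    (hC : ∀ jj, 1 ≤ jj → jj ≤ m - 2 → v jj * u (jj + 1) = t * (u jj * v (jj + 1)))
    -- equations of the local Hilbert scheme H̃
    (h0 : a 0 * u 1 = t * v 1) (hm0 : d 0 * v (m - 1) = t * u (m - 1))
    (hud : ∀ jj, 1 ≤ jj → jj ≤ m - 1 → a jj * u jj = d (m - jj) * v jj)
    -- the universal generators F₀, …, Fₘ
    (F : ℕ → MvPolynomial (Fin 2) ℂ)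
    (hF0 : F 0 = X 0 ^ m + ∑ r ∈ Finset.range m, C (a r) * X 0 ^ r)
    (hFm : F m = C (d 0) + X 1 ^ m + ∑ s ∈ Finset.Ico 1 m, C (d s) * X 1 ^ s)
    (hFk : ∀ kk, 1 ≤ kk → kk ≤ m - 1 →
      F kk = C (u kk) *
          (X 0 ^ (m - kk) + ∑ r ∈ Finset.range (m - kk), C (a (kk + r)) * X 0 ^ r)
        + C (v kk) *
          (X 1 ^ kk + ∑ s ∈ Finset.Ico 1 kk, C (d (m - kk + s)) * X 1 ^ s)) :
    ∃ B : Module.Basis (Fin m) ℂ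
        (MvPolynomial (Fin 2) ℂ ⧸
          (Ideal.span ({X 0 * X 1 - C t} ∪ {p | ∃ kk ≤ m, p = F kk}) :
            Ideal (MvPolynomial (Fin 2) ℂ))),
      ∀ jj : Fin m, B jj = Ideal.Quotient.mk _
        (if (jj : ℕ) ≤ m - i then X 0 ^ (jj : ℕ) else X 1 ^ ((jj : ℕ) - (m - i))) := by
  classical
  set I : Ideal (MvPolynomial (Fin 2) ℂ) :=
    Ideal.span ({X 0 * X 1 - C t} ∪ {p | ∃ kk ≤ m, p = F kk}) with hI
  have hxyI : X 0 * X 1 - C t ∈ I := by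
    rw [hI]; exact Ideal.subset_span (Or.inl rfl)
  have hFI : ∀ k, k ≤ m → F k ∈ I := by
    intro k hk; rw [hI]; exact Ideal.subset_span (Or.inr ⟨k, hk, rfl⟩)
  set G : Polynomial ℂ := Stmt15.Gk m t a d u v (i-1) with hGdef
  have hMon : G.Monic := Stmt15.G_monic m i t a d u v hm hi1 him hu
  have hdeg : G.natDegree = m := Stmt15.G_natDegree m i t a d u v hm hi1 him hu
  have hc0 : G.coeff 0 ≠ 0 :=
    Stmt15.G_coeff_zero m i t a d u v hm hi1 him ht hu hv hC h0 hm0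
  set ρ : AdjoinRoot G := AdjoinRoot.root G with hρ
  have hGρ : Polynomial.aeval ρ G = 0 := by
    rw [hρ, AdjoinRoot.aeval_eq, AdjoinRoot.mk_self]
  have hGρ' : Polynomial.aeval ρ (Stmt15.Gk m t a d u v (i-1)) = 0 := by
    rw [← hGdef]; exact hGρ
  set w : AdjoinRoot G := Polynomial.aeval ρ (Polynomial.C (-(G.coeff 0)⁻¹) * G.divX) with hwdef
  have hw : ρ * w = 1 := by
    have h1 : Polynomial.X * (Polynomial.C (-(G.coeff 0)⁻¹) * G.divX)
        = Polynomial.C (-(G.coeff 0)⁻¹) * (G - Polynomial.C (G.coeff 0)) := by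
      rw [mul_left_comm, eq_sub_of_add_eq (Polynomial.X_mul_divX_add G)]
    calc ρ * w
        = Polynomial.aeval ρ (Polynomial.X * (Polynomial.C (-(G.coeff 0)⁻¹) * G.divX)) := by
          rw [map_mul, Polynomial.aeval_X, hwdef]
      _ = 1 := by
          rw [h1, map_mul, map_sub, hGρ, Polynomial.aeval_C, Polynomial.aeval_C, zero_sub,
            map_neg, neg_mul_neg, ← map_mul, inv_mul_cancel₀ hc0, map_one]
  set ε : MvPolynomial (Fin 2) ℂ →ₐ[ℂ] AdjoinRoot G :=
    MvPolynomial.aeval ![ρ, algebraMap ℂ (AdjoinRoot G) t * w] with hεdef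
  have hεF : ∀ k, k ≤ m → ε (F k) = 0 := by
    intro k hk
    have he := Stmt15.evalF m t a d u v hm F hF0 hFm hFk ρ w hw k hk
    rw [Stmt15.prop_all m i t a d u v hm hi1 him ht hu hv hC h0 hm0 hud k hk, map_mul,
      Polynomial.aeval_C, hGρ', mul_zero, ← hεdef] at he
    have h2 : (ρ * w) ^ k = 1 := by rw [hw, one_pow]
    calc ε (F k) = ε (F k) * ((ρ * w) ^ k) := by rw [h2, mul_one]
      _ = (ε (F k) * ρ ^ k) * w ^ k := by rw [mul_pow]; ring
      _ = 0 := by rw [he, zero_mul]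
  have hker : ∀ p, p ∈ I → ε p = 0 := by
    have hle : I ≤ RingHom.ker ε.toRingHom := by
      rw [hI, Ideal.span_le]
      rintro q (hq | ⟨kk, hkk, rfl⟩)
      · rw [Set.mem_singleton_iff] at hq
        subst hq
        simp only [SetLike.mem_coe, RingHom.mem_ker, AlgHom.toRingHom_eq_coe,
          RingHom.coe_coe, hεdef]
        simp only [map_sub, map_mul, MvPolynomial.aeval_X, MvPolynomial.aeval_C,
          Matrix.cons_val_zero, Matrix.cons_val_one, Matrix.head_cons]
        rw [mul_left_comm, hw, mul_one, sub_self]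
      · simp only [SetLike.mem_coe, RingHom.mem_ker, AlgHom.toRingHom_eq_coe, RingHom.coe_coe]
        exact hεF kk hkk
    intro p hp
    have := hle hp
    rwa [RingHom.mem_ker, AlgHom.toRingHom_eq_coe, RingHom.coe_coe] at this
  set εbar : (MvPolynomial (Fin 2) ℂ ⧸ I) →ₐ[ℂ] AdjoinRoot G :=
    Ideal.Quotient.liftₐ I ε hker with hεbar
  have hεb : ∀ p, εbar (Ideal.Quotient.mk I p) = ε p := fun p => by
    rw [hεbar, Ideal.Quotient.liftₐ_apply]
    rfl
  -- linear independence
  have hli0 : LinearIndependent ℂ (fun j : Fin (G.natDegree) => ρ ^ (j : ℕ)) := by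
    have h := (AdjoinRoot.powerBasis' hMon).basis.linearIndependent
    have hfun : ⇑(AdjoinRoot.powerBasis' hMon).basis
        = fun j : Fin ((AdjoinRoot.powerBasis' hMon).dim) => ρ ^ (j : ℕ) := by
      funext j
      rw [(AdjoinRoot.powerBasis' hMon).basis_eq_pow j, AdjoinRoot.powerBasis'_gen, ← hρ]
    rw [hfun] at h
    exact h
  have hli1 : LinearIndependent ℂ (fun j : Fin m => ρ ^ (j : ℕ)) := by
    have h2 := hli0.comp (fun j : Fin m => Fin.cast hdeg.symm j)
      (fun x y hxy' => by
        have h3 := congrArg Fin.val hxy'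
        simp only [Fin.coe_cast] at h3
        exact Fin.ext h3)
    simpa [Function.comp_def, Fin.coe_cast] using h2
  set σ : Fin m → Fin m := fun j =>
    ⟨if (j : ℕ) ≤ m - i then (j : ℕ) + (i - 1) else m - 1 - (j : ℕ), by
      have := j.isLt; split_ifs <;> omega⟩ with hσ
  have hσinj : Function.Injective σ := by
    intro x y hxy'
    have hx := x.isLt
    have hy := y.isLt
    have h3 := congrArg Fin.val hxy'
    simp only [hσ] at h3
    apply Fin.ext
    split_ifs at h3 <;> omega
  have hli2 := hli1.comp σ hσinj
  set cu : Fin m → ℂˣ := fun j =>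
    if (j : ℕ) ≤ m - i then 1 else Units.mk0 (t ^ ((j : ℕ) - (m - i))) (pow_ne_zero _ ht)
    with hcu
  have hli3 := hli2.units_smul cu
  have heq : (cu • fun j : Fin m => ρ ^ ((σ j : ℕ)))
      = fun j : Fin m => ρ ^ (i-1) * εbar (Ideal.Quotient.mk I
          (if (j : ℕ) ≤ m - i then X 0 ^ (j : ℕ) else X 1 ^ ((j : ℕ) - (m - i)))) := by
    funext j
    have hj1 := j.isLt
    have hsmul : (cu • fun j : Fin m => ρ ^ ((σ j : ℕ))) j = (cu j : ℂ) • ρ ^ ((σ j : ℕ)) := rfl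
    rw [hsmul]
    by_cases hj : (j : ℕ) ≤ m - i
    · rw [if_pos hj, hεb, hεdef]
      simp only [hσ, hcu, if_pos hj]
      rw [map_pow, MvPolynomial.aeval_X, Matrix.cons_val_zero, Units.val_one, one_smul,
        pow_add, mul_comm]
    · rw [if_neg hj, hεb, hεdef]
      simp only [hσ, hcu, if_neg hj]
      rw [map_pow, MvPolynomial.aeval_X, Matrix.cons_val_one, Matrix.cons_val_zero,
        Units.val_mk0, mul_comm (ρ ^ (i-1)),
        Stmt15.tw_pow t ρ w hw ((j : ℕ) - (m - i)) (i-1) (by omega),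
        Algebra.smul_def, map_pow,
        show m - 1 - (j : ℕ) = i - 1 - ((j : ℕ) - (m - i)) by omega]
  have hli4 : LinearIndependent ℂ (fun j : Fin m => ρ ^ (i-1) * εbar (Ideal.Quotient.mk I
      (if (j : ℕ) ≤ m - i then X 0 ^ (j : ℕ) else X 1 ^ ((j : ℕ) - (m - i))))) := by
    rw [← heq]; exact hli3
  have hli5 : LinearIndependent ℂ (fun j : Fin m => εbar (Ideal.Quotient.mk I
      (if (j : ℕ) ≤ m - i then X 0 ^ (j : ℕ) else X 1 ^ ((j : ℕ) - (m - i))))) := by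
    apply LinearIndependent.of_comp (LinearMap.mulLeft ℂ (ρ ^ (i-1)))
    exact hli4
  have hli : LinearIndependent ℂ (fun j : Fin m => Ideal.Quotient.mk I
      (if (j : ℕ) ≤ m - i then X 0 ^ (j : ℕ) else X 1 ^ ((j : ℕ) - (m - i)))) := by
    apply LinearIndependent.of_comp εbar.toLinearMap
    exact hli5
  have hsp : ⊤ ≤ Submodule.span ℂ (Set.range (fun j : Fin m => Ideal.Quotient.mk I
      (if (j : ℕ) ≤ m - i then X 0 ^ (j : ℕ) else X 1 ^ ((j : ℕ) - (m - i))))) :=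
    Stmt15.span_top m i t a d u v F I hm hi1 him hu hv hF0 hFm hFk hxyI hFI
  exact ⟨Module.Basis.mk hli hsp, fun j => Module.Basis.mk_apply hli hsp j⟩
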